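/- Let D be a division ring, m, n be positive integers, and A, B ∈ M_{m×n}(D). Assume the rank r of A is greater than 1, and suppose that every rank r−1 matrix of M_{m×n}(D) that is adjacent to A is also adjacent to B. Then either A = B, or B = 0 and r = 2. -/

import Mathlib

open Matrix

variable {D : Type*} [DivisionRing D]

/-- The rank of a matrix over a division ring: the dimension of its row space,
i.e. of the left `D`-subspace of `D^n` spanned by the rows. -/
noncomputable def rowRank {m n : ℕ} (A : Matrix (Fin m) (Fin n) D) : ℕ :=
  Module.finrank D (Submodule.span D (Set.range fun i => A i))

/-- Two matrices are adjacent if their difference has rank one. -/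
def Adjacent {m n : ℕ} (A B : Matrix (Fin m) (Fin n) D) : Prop :=
  rowRank (A - B) = 1

/-- `R(x)`: the set of matrices of the form `ᵗu x` for a fixed row vector `x`. -/
def Rvec {m n : ℕ} (x : Fin n → D) : Set (Matrix (Fin m) (Fin n) D) :=
  { M | ∃ u : Fin m → D, ∀ i j, M i j = u i * x j }

/-- `L(ᵗy)`: the set of matrices of the form `ᵗy v` for a fixed column vector `ᵗy`. -/
def Lvec {m n : ℕ} (y : Fin m → D) : Set (Matrix (Fin m) (Fin n) D) :=
  { M | ∃ v : Fin n → D, ∀ i j, M i j = y i * v j }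

/-- `R_d`: the matrices whose row space is contained in `d`. -/
def Rsub {m n : ℕ} (d : Submodule D (Fin n → D)) : Set (Matrix (Fin m) (Fin n) D) :=
  { M | ∀ i, M i ∈ d }

/-- `L_e`: the matrices whose column space (a right subspace, i.e. a `Dᵐᵒᵖ`-submodule)
is contained in `e`. -/
def Lsub {m n : ℕ} (e : Submodule Dᵐᵒᵖ (Fin m → D)) : Set (Matrix (Fin m) (Fin n) D) :=
  { M | ∀ j, (fun i => M i j) ∈ e }

/-- The orthogonal set of a set `e` of column vectors. -/
def perpSet {m : ℕ} (e : Set (Fin m → D)) : Set (Fin m → D) :=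
  { u | ∀ v ∈ e, ∑ i, u i * v i = 0 }

/-- The `p × q` matrix with upper-left block `B` and zeros elsewhere. -/
def pad {m n : ℕ} (p q : ℕ) (B : Matrix (Fin m) (Fin n) D) :
    Matrix (Fin p) (Fin q) D :=
  Matrix.of fun i j =>
    if hi : (i : ℕ) < m then if hj : (j : ℕ) < n then B ⟨i, hi⟩ ⟨j, hj⟩ else 0 else 0

/-- `φ` is degenerate with respect to `A`. -/
def DegenerateAt {m n p q : ℕ} (φ : Matrix (Fin m) (Fin n) D → Matrix (Fin p) (Fin q) D)
    (A : Matrix (Fin m) (Fin n) D) : Prop :=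
  ∃ x : Fin p → D, x ≠ 0 ∧ ∃ y : Fin q → D, y ≠ 0 ∧
    ∀ M : Matrix (Fin m) (Fin n) D, rowRank M ≤ 1 →
      φ (A + M) - φ A ∈ Rvec y ∪ Lvec x

/-- `φ` is degenerate: degenerate with respect to every matrix. -/
def Degenerate {m n p q : ℕ} (φ : Matrix (Fin m) (Fin n) D → Matrix (Fin p) (Fin q) D) :
    Prop :=
  ∀ A, DegenerateAt φ A

/-- A map (sending `0` to `0`) is degenerate with respect to `0` iff it maps every matrix of
rank at most one into `R(y) ∪ L(ᵗx)` for some nonzero `y`, `x`. -/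
def DegZero {m n p q : ℕ} (φ : Matrix (Fin m) (Fin n) D → Matrix (Fin p) (Fin q) D) :
    Prop :=
  ∃ x : Fin p → D, x ≠ 0 ∧ ∃ y : Fin q → D, y ≠ 0 ∧
    ∀ M : Matrix (Fin m) (Fin n) D, rowRank M ≤ 1 → φ M ∈ Rvec y ∪ Lvec x

/-- A standard adjacency preserver. -/
def Standard {m n p q : ℕ} (φ : Matrix (Fin m) (Fin n) D → Matrix (Fin p) (Fin q) D) :
    Prop :=
  (m ≤ p ∧ n ≤ q ∧ ∃ τ : D ≃+* D, ∃ T : Matrix (Fin p) (Fin p) D,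
    ∃ S : Matrix (Fin q) (Fin q) D, ∃ R : Matrix (Fin p) (Fin q) D,
    IsUnit T ∧ IsUnit S ∧ ∀ A, φ A = T * pad p q (A.map τ) * S + R) ∨
  (n ≤ p ∧ m ≤ q ∧ ∃ σ : D → D, Function.Bijective σ ∧ σ 1 = 1 ∧
    (∀ a b, σ (a + b) = σ a + σ b) ∧ (∀ a b, σ (a * b) = σ b * σ a) ∧
    ∃ T : Matrix (Fin p) (Fin p) D, ∃ S : Matrix (Fin q) (Fin q) D,
    ∃ R : Matrix (Fin p) (Fin q) D, IsUnit T ∧ IsUnit S ∧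
    ∀ A, φ A = T * pad p q (A.map σ).transpose * S + R)

/-- A division ring is EAS if every (unital) ring endomorphism of it is surjective. -/
def EAS (D : Type*) [DivisionRing D] : Prop :=
  ∀ f : D →+* D, Function.Surjective f

/-- A set of matrices is adjacent if any two distinct members are adjacent. -/
def IsAdjacentSet {m n : ℕ} (S : Set (Matrix (Fin m) (Fin n) D)) : Prop :=
  ∀ A ∈ S, ∀ B ∈ S, A ≠ B → Adjacent A B


open Submodule Module Set

section auxtools
variable {D : Type*} [DivisionRing D] {V : Type*} [AddCommGroup V] [Module D V]

/-- The linear map sending a coefficient vector to the corresponding combination. -/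
noncomputable def lcmap {m : ℕ} (v : Fin m → V) : (Fin m → D) →ₗ[D] V where
  toFun c := ∑ i, c i • v i
  map_add' c d := by simp [add_smul, Finset.sum_add_distrib]
  map_smul' d c := by simp [mul_smul, Finset.smul_sum]

lemma lcmap_apply {m : ℕ} (v : Fin m → V) (c : Fin m → D) :
    lcmap v c = ∑ i, c i • v i := rfl

lemma lcmap_single {m : ℕ} (v : Fin m → V) (i : Fin m) :
    lcmap (D := D) v (Pi.single i 1) = v i := by
  rw [lcmap_apply]
  rw [Finset.sum_eq_single i]
  · simp
  · intro j _ hj; simp [Pi.single_apply, hj]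
  · simp

lemma range_lcmap {m : ℕ} (v : Fin m → V) :
    LinearMap.range (lcmap (D := D) v) = span D (Set.range v) := by
  apply le_antisymm
  · rintro _ ⟨c, rfl⟩
    rw [lcmap_apply]
    exact Submodule.sum_mem _ fun i _ =>
      Submodule.smul_mem _ _ (Submodule.subset_span (Set.mem_range_self i))
  · rw [span_le]
    rintro _ ⟨i, rfl⟩
    exact ⟨Pi.single i 1, lcmap_single v i⟩

lemma exists_dual_one (x : V) (hx : x ≠ 0) : ∃ g : V →ₗ[D] D, g x = 1 := by
  have hs : LinearIndepOn D id ({x} : Set V) := LinearIndepOn.singleton hx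
  let b := Module.Basis.extend hs
  have hmem : x ∈ hs.extend (Set.subset_univ _) :=
    hs.subset_extend _ (Set.mem_singleton x)
  refine ⟨b.coord ⟨x, hmem⟩, ?_⟩
  have h1 : b ⟨x, hmem⟩ = x := Module.Basis.extend_apply_self hs _
  have h2 : b.coord ⟨x, hmem⟩ (b ⟨x, hmem⟩) = 1 := by
    rw [Basis.coord_apply, b.repr_self, Finsupp.single_eq_same]
  rwa [h1] at h2

lemma exists_dual_pair (x y : V) (hx : x ≠ 0) (hy : y ∉ span D {x}) (t : D) :
    ∃ g : V →ₗ[D] D, g x = 1 ∧ g y = t := by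
  have hs1 : LinearIndepOn D id ({x} : Set V) := LinearIndepOn.singleton hx
  have hs : LinearIndepOn D id (insert y {x} : Set V) := hs1.id_insert hy
  let b := Module.Basis.extend hs
  have hmx : x ∈ hs.extend (Set.subset_univ _) :=
    hs.subset_extend _ (Set.mem_insert_of_mem _ (Set.mem_singleton x))
  have hmy : y ∈ hs.extend (Set.subset_univ _) :=
    hs.subset_extend _ (Set.mem_insert _ _)
  have hxy : x ≠ y := fun h => hy (h ▸ mem_span_singleton_self x)
  set ix : hs.extend (Set.subset_univ _) := ⟨x, hmx⟩
  set iy : hs.extend (Set.subset_univ _) := ⟨y, hmy⟩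
  have hne : iy ≠ ix := fun h => hxy (congrArg Subtype.val h).symm
  have key1 : ∀ i : hs.extend (Set.subset_univ _), b.coord i (b i) = 1 := by
    intro i
    rw [Basis.coord_apply, b.repr_self, Finsupp.single_eq_same]
  have key0 : ∀ i j : hs.extend (Set.subset_univ _), j ≠ i → b.coord i (b j) = 0 := by
    intro i j hij
    rw [Basis.coord_apply, b.repr_self, Finsupp.single_eq_of_ne hij.symm]
  have hbx : b ix = x := Module.Basis.extend_apply_self hs _
  have hby : b iy = y := Module.Basis.extend_apply_self hs _
  refine ⟨b.coord ix + (LinearMap.toSpanSingleton D D t).comp (b.coord iy), ?_, ?_⟩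
  · have h2 : b.coord ix (b ix) + (LinearMap.toSpanSingleton D D t) (b.coord iy (b ix)) = 1 := by
      rw [key1, key0 _ _ (fun h => hne h.symm)]
      simp [LinearMap.toSpanSingleton_apply]
    rw [hbx] at h2
    simpa using h2
  · have h2 : b.coord ix (b iy) + (LinearMap.toSpanSingleton D D t) (b.coord iy (b iy)) = t := by
      rw [key1, key0 _ _ hne]
      simp [LinearMap.toSpanSingleton_apply]
    rw [hby] at h2
    simpa using h2

variable [FiniteDimensional D V]

lemma finrank_one_of_line {m : ℕ} (v : Fin m → V) (z : V) (hz : z ≠ 0)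
    (hmem : ∀ i, v i ∈ span D {z}) (i0 : Fin m) (h0 : v i0 ≠ 0) :
    finrank D (span D (Set.range v)) = 1 := by
  have hle : span D (Set.range v) ≤ span D {z} := by
    rw [span_le]; rintro _ ⟨i, rfl⟩; exact hmem i
  have h1 : finrank D (span D (Set.range v)) ≤ 1 := by
    have := Submodule.finrank_mono (R := D) hle
    rwa [finrank_span_singleton hz] at this
  have h2 : span D (Set.range v) ≠ ⊥ := by
    rw [Submodule.ne_bot_iff]
    exact ⟨v i0, subset_span (mem_range_self i0), h0⟩
  have h3 : finrank D (span D (Set.range v)) ≠ 0 := by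
    rw [Ne, Submodule.finrank_eq_zero]; exact h2
  omega

lemma exists_span_of_finrank_one (p : Submodule D V) (hp : finrank D p = 1) :
    ∃ z, z ≠ 0 ∧ p = span D {z} := by
  have hpne : p ≠ ⊥ := by
    intro h; rw [h] at hp; simp at hp
  obtain ⟨z, hzp, hz⟩ := (Submodule.ne_bot_iff p).mp hpne
  refine ⟨z, hz, ?_⟩
  refine (Submodule.eq_of_le_of_finrank_le ?_ ?_).symm
  · rw [span_le, Set.singleton_subset_iff]; exact hzp
  · rw [hp, finrank_span_singleton hz]

end auxtools

section mainaux
variable {D : Type*} [DivisionRing D]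

lemma lcmap_sub_formula {m n : ℕ} (a e : Fin m → (Fin n → D))
    (g : (Fin n → D) →ₗ[D] D) (x : Fin n → D) (c : Fin m → D) :
    lcmap (fun i => e i - g (a i) • x) c = lcmap e c - g (lcmap a c) • x := by
  simp only [lcmap_apply, smul_sub, Finset.sum_sub_distrib]
  congr 1
  rw [map_sum, Finset.sum_smul]
  apply Finset.sum_congr rfl
  intro i _
  rw [_root_.map_smul, smul_eq_mul, smul_smul]

noncomputable def psimap {m n : ℕ} (a e : Fin m → (Fin n → D))
    (g : (Fin n → D) →ₗ[D] D) (x : Fin n → D) : (Fin m → D) →ₗ[D] (Fin n → D) :=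
  lcmap (D := D) (fun i => e i - g (a i) • x)

lemma psimap_apply {m n : ℕ} (a e : Fin m → (Fin n → D))
    (g : (Fin n → D) →ₗ[D] D) (x : Fin n → D) (c : Fin m → D) :
    psimap a e g x c = lcmap (D := D) e c - g (lcmap (D := D) a c) • x :=
  lcmap_sub_formula a e g x c

lemma range_psimap {m n : ℕ} (a e : Fin m → (Fin n → D))
    (g : (Fin n → D) →ₗ[D] D) (x : Fin n → D) :
    LinearMap.range (psimap a e g x) =
      Submodule.span D (Set.range fun i => e i - g (a i) • x) :=
  range_lcmap _

lemma main_aux {m n : ℕ} (a e : Fin m → (Fin n → D))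
    (hr : 1 < Module.finrank D (Submodule.span D (Set.range a)))
    (hne : e ≠ 0)
    (hKEY : ∀ x ∈ Submodule.span D (Set.range a), x ≠ 0 →
      ∀ g : (Fin n → D) →ₗ[D] D, g x = 1 →
      Module.finrank D (Submodule.span D (Set.range fun i => e i - g (a i) • x)) = 1) :
    (∀ i, e i = a i) ∧ Module.finrank D (Submodule.span D (Set.range a)) = 2 := by
  classical
  set π := lcmap (D := D) a with hπdef
  set ε := lcmap (D := D) e with hεdef
  have hWr : LinearMap.range π = Submodule.span D (Set.range a) := range_lcmap a
  have hrπ : 1 < Module.finrank D (LinearMap.range π) := by rw [hWr]; exact hr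
  -- hK : the key hypothesis in range form
  have hK : ∀ x ∈ LinearMap.range π, x ≠ 0 → ∀ g : (Fin n → D) →ₗ[D] D, g x = 1 →
      Module.finrank D (LinearMap.range (psimap a e g x)) = 1 := by
    intro x hx hx0 g hg
    rw [range_psimap]
    exact hKEY x (hWr ▸ hx) hx0 g hg
  -- Step 1 : relations are preserved
  have hrel : ∀ c : Fin m → D, π c = 0 → ε c = 0 := by
    by_contra hcon
    push_neg at hcon
    obtain ⟨c0, hc0π, hc0ε⟩ := hcon
    have hxz : ∀ x ∈ LinearMap.range π, x ≠ 0 → x ∈ Submodule.span D {ε c0} := by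
      intro x hxW hx0
      have hnle : ¬ (LinearMap.range π ≤ Submodule.span D {x}) := by
        intro hle
        have := Submodule.finrank_mono (R := D) hle
        rw [finrank_span_singleton hx0] at this
        omega
      obtain ⟨w, hwW, hwx⟩ := SetLike.not_le_iff_exists.mp hnle
      obtain ⟨c1, rfl⟩ := hwW
      have main : ∀ g : (Fin n → D) →ₗ[D] D, g x = 1 → ∀ c,
          ε c - g (π c) • x ∈ Submodule.span D {ε c0} := by
        intro g hg c
        have h1 := hK x hxW hx0 g hg
        have hz0mem : ε c0 ∈ LinearMap.range (psimap a e g x) :=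
          ⟨c0, by rw [psimap_apply, ← hπdef, ← hεdef, hc0π, map_zero, zero_smul, sub_zero]⟩
        have heq : Submodule.span D {ε c0} = LinearMap.range (psimap a e g x) := by
          refine Submodule.eq_of_le_of_finrank_le ?_ ?_
          · rw [Submodule.span_le, Set.singleton_subset_iff]; exact hz0mem
          · rw [h1, finrank_span_singleton hc0ε]
        rw [heq]
        exact ⟨c, by rw [psimap_apply, ← hπdef, ← hεdef]⟩
      obtain ⟨g0, hg0x, hg0y⟩ := exists_dual_pair (D := D) x (π c1) hx0 hwx 0
      obtain ⟨g1, hg1x, hg1y⟩ := exists_dual_pair (D := D) x (π c1) hx0 hwx 1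
      have e1 : ε c1 ∈ Submodule.span D {ε c0} := by
        have := main g0 hg0x c1
        rwa [hg0y, zero_smul, sub_zero] at this
      have e2 : ε c1 - x ∈ Submodule.span D {ε c0} := by
        have := main g1 hg1x c1
        rwa [hg1y, one_smul] at this
      have := Submodule.sub_mem _ e1 e2
      simpa using this
    have hle : LinearMap.range π ≤ Submodule.span D {ε c0} := by
      intro w hw
      by_cases hw0 : w = 0
      · rw [hw0]; exact Submodule.zero_mem _
      · exact hxz w hw hw0
    have := Submodule.finrank_mono (R := D) hle
    rw [finrank_span_singleton hc0ε] at this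
    omega
  have hsub : ∀ c c' : Fin m → D, π c = π c' → ε c = ε c' := by
    intro c c' hcc
    have := hrel (c - c') (by rw [map_sub, hcc, sub_self])
    rw [map_sub, sub_eq_zero] at this
    exact this
  obtain ⟨i0, hi0⟩ := Function.ne_iff.mp hne
  have hd1 : 1 ≤ Module.finrank D (LinearMap.range ε) := by
    have hne' : LinearMap.range ε ≠ ⊥ := by
      rw [Submodule.ne_bot_iff]
      exact ⟨e i0, ⟨Pi.single i0 1, lcmap_single e i0⟩, hi0⟩
    have : Module.finrank D (LinearMap.range ε) ≠ 0 := by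
      rw [Ne, Submodule.finrank_eq_zero]; exact hne'
    omega
  -- x exists in range π
  have hrangeπ_ne : LinearMap.range π ≠ ⊥ := by
    intro hbot
    rw [hbot] at hrπ
    simp at hrπ
  obtain ⟨x₀, hx₀W, hx₀0⟩ := (Submodule.ne_bot_iff _).mp hrangeπ_ne
  -- range ε is contained in range ψ ⊔ span{x} for each admissible (x, g)
  have hsup : ∀ x ∈ LinearMap.range π, x ≠ 0 → ∀ g : (Fin n → D) →ₗ[D] D, g x = 1 →
      LinearMap.range ε ≤ LinearMap.range (psimap a e g x) ⊔ Submodule.span D {x} := by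
    intro x hxW hx0 g hg
    rintro _ ⟨c, rfl⟩
    rw [Submodule.mem_sup]
    refine ⟨psimap a e g x c, ⟨c, rfl⟩, g (π c) • x,
      Submodule.smul_mem _ _ (Submodule.mem_span_singleton_self x), ?_⟩
    rw [psimap_apply, ← hπdef, ← hεdef, sub_add_cancel]
  have hsupfin : ∀ x ∈ LinearMap.range π, x ≠ 0 → ∀ g : (Fin n → D) →ₗ[D] D, g x = 1 →
      Module.finrank D ↥(LinearMap.range (psimap a e g x) ⊔ Submodule.span D {x}) ≤ 2 := by
    intro x hxW hx0 g hg
    have h1 := hK x hxW hx0 g hg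
    have h2 := finrank_span_singleton (K := D) hx0
    have h3 := Submodule.finrank_sup_add_finrank_inf_eq
      (LinearMap.range (psimap a e g x)) (Submodule.span D {x})
    omega
  have hd2 : Module.finrank D (LinearMap.range ε) ≤ 2 := by
    obtain ⟨g, hg⟩ := exists_dual_one (D := D) x₀ hx₀0
    have hle := hsup x₀ hx₀W hx₀0 g hg
    have := Submodule.finrank_mono (R := D) hle
    have := hsupfin x₀ hx₀W hx₀0 g hg
    omega
  have hcases : Module.finrank D (LinearMap.range ε) = 1 ∨
      Module.finrank D (LinearMap.range ε) = 2 := by omega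
  -- rule out rank ε = 1
  have hd2eq : Module.finrank D (LinearMap.range ε) = 2 := by
    rcases hcases with hd | hd
    · exfalso
      obtain ⟨y, hy0, hyspan⟩ := exists_span_of_finrank_one (LinearMap.range ε) hd
      have hymem : y ∈ LinearMap.range ε := by
        rw [hyspan]; exact Submodule.mem_span_singleton_self y
      obtain ⟨cy, hcy⟩ := hymem
      -- the key step, applied twice
      have step : ∀ (x' : Fin n → D) (cy' : Fin m → D), ε cy' = y → π cy' = x' → x' ≠ 0 →
          ∀ c1' : Fin m → D, ε c1' = 0 → π c1' ∉ Submodule.span D {x'} →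
          y ∈ Submodule.span D {x'} := by
        intro x' cy' hcy' hπ' hx0' c1' h1 h2
        obtain ⟨g, hgx, hgy1⟩ := exists_dual_pair (D := D) x' (π c1') hx0' h2 1
        have hx'W : x' ∈ LinearMap.range π := ⟨cy', hπ'⟩
        have hrank := hK x' hx'W hx0' g hgx
        have m1 : y - x' ∈ LinearMap.range (psimap a e g x') :=
          ⟨cy', by rw [psimap_apply, ← hπdef, ← hεdef, hcy', hπ', hgx, one_smul]⟩
        have m2 : -x' ∈ LinearMap.range (psimap a e g x') :=
          ⟨c1', by rw [psimap_apply, ← hπdef, ← hεdef, h1, hgy1, one_smul, zero_sub]⟩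
        have hxmem : x' ∈ LinearMap.range (psimap a e g x') := by
          have := Submodule.neg_mem _ m2; simpa using this
        have heq : Submodule.span D {x'} = LinearMap.range (psimap a e g x') := by
          refine Submodule.eq_of_le_of_finrank_le ?_ ?_
          · rw [Submodule.span_le, Set.singleton_subset_iff]; exact hxmem
          · rw [hrank, finrank_span_singleton hx0']
        have hm1' : y - x' ∈ Submodule.span D {x'} := by rw [heq]; exact m1
        have := Submodule.add_mem _ hm1' (Submodule.mem_span_singleton_self x')
        simpa using this
      -- first application : x := π cy
      have hx0 : π cy ≠ 0 := fun hh => hy0 (hcy ▸ hrel cy hh)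
      have hexc1 : ∃ c1, ε c1 = 0 ∧ π c1 ∉ Submodule.span D {π cy} := by
        by_contra hno
        push_neg at hno
        have hle : LinearMap.range π ≤ Submodule.span D {π cy} := by
          rintro _ ⟨c, rfl⟩
          have hmem : ε c ∈ Submodule.span D {y} := by
            rw [← hyspan]; exact ⟨c, rfl⟩
          obtain ⟨d, hdd⟩ := Submodule.mem_span_singleton.mp hmem
          have h0 : ε (c - d • cy) = 0 := by
            rw [map_sub, _root_.map_smul, hcy, hdd, sub_self]
          have hmem2 := hno (c - d • cy) h0
          have hrw : π c = π (c - d • cy) + d • π cy := by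
            rw [map_sub, _root_.map_smul, sub_add_cancel]
          rw [hrw]
          exact Submodule.add_mem _ hmem2
            (Submodule.smul_mem _ _ (Submodule.mem_span_singleton_self _))
        have := Submodule.finrank_mono (R := D) hle
        rw [finrank_span_singleton hx0] at this
        omega
      obtain ⟨c1, hc1ε, hc1π⟩ := hexc1
      have hy_x : y ∈ Submodule.span D {π cy} := step (π cy) cy hcy rfl hx0 c1 hc1ε hc1π
      -- second application : x2 := π cy + π c1
      have hx2 : π cy + π c1 ∉ Submodule.span D {π cy} := by
        intro hmem
        apply hc1π
        have := Submodule.sub_mem _ hmem (Submodule.mem_span_singleton_self (π cy))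
        simpa using this
      have hx20 : π cy + π c1 ≠ 0 := fun hh => hx2 (by rw [hh]; exact Submodule.zero_mem _)
      have hc1x2 : π c1 ∉ Submodule.span D {π cy + π c1} := by
        intro hmem
        obtain ⟨d, hdd⟩ := Submodule.mem_span_singleton.mp hmem
        by_cases hdone : d = 1
        · rw [hdone, one_smul] at hdd
          have : π cy = 0 := by
            have := congrArg (fun z => z - π c1) hdd
            simpa using this
          exact hx0 this
        · apply hc1π
          rw [Submodule.mem_span_singleton]
          -- from d • (π cy + π c1) = π c1 : (1 - d) • π c1 = d • π cy
          have h1 : d • π cy + d • π c1 = π c1 := by rw [← smul_add]; exact hdd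
          have h2 : (1 - d) • π c1 = d • π cy := by
            rw [sub_smul, one_smul]
            exact (eq_sub_of_add_eq h1).symm
          have hd10 : (1 : D) - d ≠ 0 := fun hh => hdone (by
            have := congrArg (fun z => z + d) hh
            simpa using this.symm)
          refine ⟨(1 - d)⁻¹ * d, ?_⟩
          rw [mul_smul, ← h2, smul_smul, inv_mul_cancel₀ hd10, one_smul]
      have hy_x2 : y ∈ Submodule.span D {π cy + π c1} := by
        refine step (π cy + π c1) (cy + c1) ?_ ?_ hx20 c1 hc1ε hc1x2
        · rw [map_add, hcy, hc1ε, add_zero]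
        · rw [map_add]
      -- conclude y = 0, contradiction
      obtain ⟨d, hdd⟩ := Submodule.mem_span_singleton.mp hy_x
      obtain ⟨d2, hdd2⟩ := Submodule.mem_span_singleton.mp hy_x2
      by_cases hd20 : d2 = 0
      · rw [hd20, zero_smul] at hdd2
        exact hy0 hdd2.symm
      · apply hx2
        rw [Submodule.mem_span_singleton]
        refine ⟨d2⁻¹ * d, ?_⟩
        rw [mul_smul, hdd, ← hdd2, smul_smul, inv_mul_cancel₀ hd20, one_smul]
    · exact hd
  -- range π = range ε, and both have rank 2
  have hWsub : LinearMap.range π ≤ LinearMap.range ε := by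
    intro x hxW
    by_cases hx0 : x = 0
    · rw [hx0]; exact Submodule.zero_mem _
    obtain ⟨g, hg⟩ := exists_dual_one (D := D) x hx0
    have hle := hsup x hxW hx0 g hg
    have hfin := hsupfin x hxW hx0 g hg
    have heq : LinearMap.range ε = LinearMap.range (psimap a e g x) ⊔ Submodule.span D {x} := by
      refine Submodule.eq_of_le_of_finrank_le hle ?_
      omega
    rw [heq]
    exact Submodule.mem_sup_right (Submodule.mem_span_singleton_self x)
  have hreq : LinearMap.range π = LinearMap.range ε := by
    refine Submodule.eq_of_le_of_finrank_le hWsub ?_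
    omega
  have hrπ2 : Module.finrank D (LinearMap.range π) = 2 := by
    have := Submodule.finrank_mono (R := D) hWsub
    omega
  -- equal kernels
  have hπeq : ∀ c c' : Fin m → D, ε c = ε c' → π c = π c' := by
    have hkle : LinearMap.ker π ≤ LinearMap.ker ε := by
      intro c hc
      rw [LinearMap.mem_ker] at *
      exact hrel c hc
    have r1 := LinearMap.finrank_range_add_finrank_ker π
    have r2 := LinearMap.finrank_range_add_finrank_ker ε
    have hkeq : LinearMap.ker π = LinearMap.ker ε := by
      refine Submodule.eq_of_le_of_finrank_le hkle ?_
      have := Submodule.finrank_mono (R := D) hkle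
      omega
    intro c c' hcc
    have h0 : ε (c - c') = 0 := by rw [map_sub, hcc, sub_self]
    have : c - c' ∈ LinearMap.ker π := by rw [hkeq, LinearMap.mem_ker]; exact h0
    rw [LinearMap.mem_ker, map_sub, sub_eq_zero] at this
    exact this
  -- the fixed point property
  have hfix : ∀ x ∈ LinearMap.range π, x ≠ 0 → ∀ c : Fin m → D, ε c = x → π c = x := by
    intro x hxW hx0 c hc
    have hgval : ∀ g : (Fin n → D) →ₗ[D] D, g x = 1 → g (π c) = 1 := by
      intro g hg
      have hrank := hK x hxW hx0 g hg
      have hnk : ¬ (LinearMap.ker (psimap a e g x) ≤ LinearMap.ker ε) := by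
        intro hle
        have r1 := LinearMap.finrank_range_add_finrank_ker (psimap a e g x)
        have r2 := LinearMap.finrank_range_add_finrank_ker ε
        have := Submodule.finrank_mono (R := D) hle
        omega
      obtain ⟨c2, hc2ψ, hc2ε⟩ := SetLike.not_le_iff_exists.mp hnk
      rw [LinearMap.mem_ker] at hc2ψ
      rw [LinearMap.mem_ker] at hc2ε
      rw [psimap_apply, ← hπdef, ← hεdef, sub_eq_zero] at hc2ψ
      have hd0 : g (π c2) ≠ 0 := fun hh => hc2ε (by rw [hc2ψ, hh, zero_smul])
      have hεc : ε ((g (π c2))⁻¹ • c2) = x := by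
        rw [_root_.map_smul, hc2ψ, smul_smul, inv_mul_cancel₀ hd0, one_smul]
      have hπc : π ((g (π c2))⁻¹ • c2) = π c := hπeq _ _ (by rw [hεc, hc])
      have : g (π ((g (π c2))⁻¹ • c2)) = 1 := by
        rw [_root_.map_smul, _root_.map_smul, smul_eq_mul, inv_mul_cancel₀ hd0]
      rw [hπc] at this
      exact this
    by_cases hcase : π c ∈ Submodule.span D {x}
    · obtain ⟨d, hdd⟩ := Submodule.mem_span_singleton.mp hcase
      obtain ⟨g, hg⟩ := exists_dual_one (D := D) x hx0
      have h1 := hgval g hg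
      rw [← hdd, _root_.map_smul, smul_eq_mul, hg, mul_one] at h1
      rw [← hdd, h1, one_smul]
    · obtain ⟨g, hg1, hg0⟩ := exists_dual_pair (D := D) x (π c) hx0 hcase 0
      have h1 := hgval g hg1
      rw [hg0] at h1
      exact absurd h1 (by norm_num)
  -- conclusion
  constructor
  · intro i
    by_cases hai : a i = 0
    · have hπs : π (Pi.single i 1) = 0 := by
        rw [hπdef, lcmap_single, hai]
      have := hrel _ hπs
      rw [hεdef, lcmap_single] at this
      rw [this, hai]
    · have hxW : a i ∈ LinearMap.range π := ⟨Pi.single i 1, by rw [hπdef, lcmap_single]⟩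
      have haiε : a i ∈ LinearMap.range ε := hWsub hxW
      obtain ⟨c, hc⟩ := haiε
      have hπc := hfix (a i) hxW hai c hc
      have hεeq : ε c = ε (Pi.single i 1) := hsub c _ (by rw [hπc, hπdef, lcmap_single])
      have : ε (Pi.single i 1) = e i := by rw [hεdef, lcmap_single]
      rw [hεeq, this] at hc
      exact hc
  · rw [← hWr]
    exact hrπ2

end mainaux

section glue
variable {D : Type*} [DivisionRing D]

/-- The linear map `v ↦ g v • x`. -/
noncomputable def sml {V : Type*} [AddCommGroup V] [Module D V]
    (g : V →ₗ[D] D) (x : V) : V →ₗ[D] V where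
  toFun v := g v • x
  map_add' u v := by rw [map_add, add_smul]
  map_smul' d v := by rw [_root_.map_smul, smul_eq_mul, mul_smul]; rfl

lemma rank_drop {V : Type*} [AddCommGroup V] [Module D V] [FiniteDimensional D V]
    (W : Submodule D V) (x : V) (hxW : x ∈ W) (hx0 : x ≠ 0)
    (g : V →ₗ[D] D) (hg : g x = 1) :
    Module.finrank D (Submodule.map (LinearMap.id - sml g x) W) + 1
      = Module.finrank D W := by
  set T : V →ₗ[D] V := LinearMap.id - sml g x with hT
  have hTapp : ∀ v, T v = v - g v • x := fun v => rfl
  set Tres : W →ₗ[D] V := T.comp W.subtype with hTres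
  have hrange : LinearMap.range Tres = Submodule.map T W := by
    rw [hTres, LinearMap.range_comp, Submodule.range_subtype]
  have hker : LinearMap.ker Tres = Submodule.span D {(⟨x, hxW⟩ : W)} := by
    apply le_antisymm
    · rintro ⟨w, hw⟩ hkw
      rw [LinearMap.mem_ker] at hkw
      have hw' : w - g w • x = 0 := hkw
      rw [sub_eq_zero] at hw'
      rw [Submodule.mem_span_singleton]
      exact ⟨g w, Subtype.ext (by simp [hw'.symm])⟩
    · rw [Submodule.span_le, Set.singleton_subset_iff]
      rw [SetLike.mem_coe, LinearMap.mem_ker]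
      show x - g x • x = 0
      rw [hg, one_smul, sub_self]
  have hrn := LinearMap.finrank_range_add_finrank_ker Tres
  rw [hrange, hker, finrank_span_singleton (by
    intro hh
    exact hx0 (congrArg Subtype.val hh))] at hrn
  exact hrn

end glue

/-- Lemma 3.3. If `A` has rank `r > 1` and every rank `r-1` matrix
adjacent to `A` is also adjacent to `B`, then `A = B`, or `B = 0` and `r = 2`. -/
theorem stmt3 (m n : ℕ) (hm : 0 < m) (hn : 0 < n)
    (A B : Matrix (Fin m) (Fin n) D) (hr : 1 < rowRank A)
    (h : ∀ C : Matrix (Fin m) (Fin n) D,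
      rowRank C = rowRank A - 1 → Adjacent C A → Adjacent C B) :
    A = B ∨ (B = 0 ∧ rowRank A = 2) := by
  classical
  by_cases hAB : A = B
  · exact Or.inl hAB
  refine Or.inr ?_
  have hne : (fun i => A i - B i) ≠ (0 : Fin m → Fin n → D) := by
    intro h0
    apply hAB
    ext i j
    have := congrFun (congrFun h0 i) j
    simpa [sub_eq_zero] using this
  have hKEY : ∀ x ∈ Submodule.span D (Set.range fun i => A i), x ≠ 0 →
      ∀ g : (Fin n → D) →ₗ[D] D, g x = 1 →
      Module.finrank D (Submodule.span D
        (Set.range fun i => (A i - B i) - g (A i) • x)) = 1 := by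
    intro x hx hx0 g hg
    set T : (Fin n → D) →ₗ[D] (Fin n → D) := LinearMap.id - sml g x with hT
    have hTapp : ∀ v, T v = v - g v • x := fun v => rfl
    set C : Matrix (Fin m) (Fin n) D := Matrix.of fun i j => A i j - g (A i) * x j with hC
    have hCrow : ∀ i, C i = A i - g (A i) • x := by
      intro i; funext j
      show A i j - g (A i) * x j = (A i - g (A i) • x) j
      simp [Pi.smul_apply, smul_eq_mul]
    have hC1 : rowRank C = rowRank A - 1 := by
      have hrows : (Set.range fun i => C i) = T '' (Set.range fun i => A i) := by
        rw [← Set.range_comp]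
        congr 1
      have hspan : Submodule.span D (Set.range fun i => C i)
          = Submodule.map T (Submodule.span D (Set.range fun i => A i)) := by
        rw [hrows, Submodule.span_image]
      have hdrop := rank_drop (Submodule.span D (Set.range fun i => A i)) x hx hx0 g hg
      rw [← hT] at hdrop
      have h1 : rowRank C
          = Module.finrank D (Submodule.map T (Submodule.span D (Set.range fun i => A i))) := by
        rw [rowRank, hspan]
      have h2 : rowRank A
          = Module.finrank D (Submodule.span D (Set.range fun i => A i)) := rfl
      omega
    have hgex : ∃ i0, g (A i0) ≠ 0 := by
      by_contra hall
      push_neg at hall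
      have hle : Submodule.span D (Set.range fun i => A i) ≤ LinearMap.ker g := by
        rw [Submodule.span_le]
        rintro _ ⟨i, rfl⟩
        rw [SetLike.mem_coe, LinearMap.mem_ker]
        exact hall i
      have hx' := hle hx
      rw [LinearMap.mem_ker] at hx'
      rw [hx'] at hg
      exact one_ne_zero hg.symm
    obtain ⟨i0, hi0⟩ := hgex
    have hC2 : Adjacent C A := by
      show rowRank (C - A) = 1
      have hrows : (fun i => (C - A) i) = fun i => (-(g (A i))) • x := by
        funext i
        funext j
        show C i j - A i j = (-(g (A i))) • x j
        rw [hC]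
        show A i j - g (A i) * x j - A i j = (-(g (A i))) • x j
        rw [sub_sub_cancel_left, smul_eq_mul, neg_mul]
      show Module.finrank D (Submodule.span D (Set.range fun i => (C - A) i)) = 1
      rw [hrows]
      refine finrank_one_of_line _ x hx0 ?_ i0 ?_
      · intro i
        rw [Submodule.mem_span_singleton]
        exact ⟨-(g (A i)), rfl⟩
      · exact smul_ne_zero (neg_ne_zero.mpr hi0) hx0
    have hC3 := h C hC1 hC2
    have hrows : (fun i => (C - B) i) = fun i => (A i - B i) - g (A i) • x := by
      funext i
      funext j
      show C i j - B i j = ((A i - B i) - g (A i) • x) j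
      rw [hC]
      show A i j - g (A i) * x j - B i j = A i j - B i j - g (A i) * x j
      rw [sub_right_comm]
    have hC3' : Module.finrank D (Submodule.span D (Set.range fun i => (C - B) i)) = 1 := hC3
    rw [hrows] at hC3'
    exact hC3'
  obtain ⟨h1, h2⟩ := main_aux (fun i => A i) (fun i => A i - B i) hr hne hKEY
  refine ⟨?_, h2⟩
  ext i j
  have := congrFun (h1 i) j
  show B i j = 0
  have hsub : A i j - B i j = A i j := this
  rw [sub_eq_self] at hsub
  exact hsub
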